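/- The collection Q_round = {Prod(q) : q ∈ [0,1]^ℕ with q_{2n−1} ∈ {1/3, 2/3} and q_{2n} = 1 if q_{2n−1} = 2/3 and q_{2n} = 0 if q_{2n−1} = 1/3, for every n ≥ 1} is UME-learnable; indeed, there is a measurable single-sample estimator A_1 : {0,1}^ℕ → [0,1]^ℕ such that for every μ ∈ Q_round and X ∼ μ, ‖A_1(X) − Mean(μ)‖_∞ = 0 almost surely. -/
import Mathlib


open MeasureTheory Filter

/-- The sup-distance `‖p − q‖_∞ = ⨆ j, |p j − q j|` between two vectors. -/
noncomputable def supDist {ι : Type*} (p q : ι → ℝ) : ℝ := ⨆ j, |p j - q j|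

/-- The mean vector of a measure on `{0,1}^ι`: `Mean(μ)_j = μ {x | x j = 1}`. -/
noncomputable def meanVec {ι : Type*} (μ : Measure (ι → Bool)) : ι → ℝ :=
  fun j => (μ {x | x j = true}).toReal

/-- UME-learnability of a collection of distributions on `{0,1}^ι`. -/
def UMELearnable {ι : Type*} (Q : Set (Measure (ι → Bool))) : Prop :=
  ∃ A : (n : ℕ) → (Fin n → (ι → Bool)) → ι → ℝ,
    (∀ n, Measurable (A n)) ∧
    (∀ n S j, A n S j ∈ Set.Icc (0 : ℝ) 1) ∧
    ∀ μ ∈ Q,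
      Tendsto (fun n : ℕ =>
          ∫ S, supDist (A n S) (meanVec μ) ∂(Measure.pi fun _ : Fin n => μ))
        atTop (nhds 0)

/-- `μ = Prod q`: the product probability measure on `{0,1}^ι` with independent
coordinates, the `j`-th coordinate having mean `q j`. -/
def IsBernoulliProduct {ι : Type*} (q : ι → ℝ) (μ : Measure (ι → Bool)) : Prop :=
  IsProbabilityMeasure μ ∧
  ∀ (F : Finset ι) (f : ι → Bool),
    μ {x | ∀ j ∈ F, x j = f j} = ∏ j ∈ F, ENNReal.ofReal (if f j then q j else 1 - q j)

/-- The mean vectors of `Q_round` (coordinates indexed by `ℕ`, the coordinate `2*n`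
playing the role of the odd coordinate `2n−1` and `2*n+1` that of the even coordinate
`2n` of the paper): each odd coordinate is `1/3` or `2/3`, and the following even
coordinate is `1` if the preceding one is `2/3` and `0` if it is `1/3`. -/
def roundVectors : Set (ℕ → ℝ) :=
  {q | ∀ n : ℕ,
    (q (2 * n) = 1 / 3 ∨ q (2 * n) = 2 / 3) ∧
    (q (2 * n) = 2 / 3 → q (2 * n + 1) = 1) ∧
    (q (2 * n) = 1 / 3 → q (2 * n + 1) = 0)}

/-- The collection `Q_round` of product measures with mean vectors in `roundVectors`. -/
def Qround : Set (Measure (ℕ → Bool)) :=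
  {μ | ∃ q ∈ roundVectors, IsBernoulliProduct q μ}

/-- The single-sample estimator. -/
noncomputable def est (x : ℕ → Bool) (j : ℕ) : ℝ :=
  if x (2 * (j / 2) + 1) then (if j % 2 = 0 then 2/3 else 1)
  else (if j % 2 = 0 then 1/3 else 0)

lemma measurable_est : Measurable est := by
  apply measurable_pi_lambda
  intro j
  have : Measurable fun b : Bool =>
      (if b then (if j % 2 = 0 then (2:ℝ)/3 else 1) else (if j % 2 = 0 then 1/3 else 0)) :=
    measurable_from_top
  exact this.comp (measurable_pi_apply _)

lemma est_mem_Icc (x : ℕ → Bool) (j : ℕ) : est x j ∈ Set.Icc (0:ℝ) 1 := by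
  unfold est
  split <;> split <;> norm_num

lemma supDist_self {ι : Type*} [Nonempty ι] (p : ι → ℝ) : supDist p p = 0 := by
  simp [supDist]

section main
variable {q : ℕ → ℝ} {μ : Measure (ℕ → Bool)}

lemma q_bounds (hq : q ∈ roundVectors) (j : ℕ) : 0 ≤ q j ∧ q j ≤ 1 := by
  rcases Nat.even_or_odd j with ⟨n, hn⟩ | ⟨n, hn⟩
  · have h := (hq n).1
    have : j = 2 * n := by omega
    subst this
    rcases h with h | h <;> rw [h] <;> norm_num
  · subst hn
    obtain ⟨h1, h2, h3⟩ := hq n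
    rcases h1 with h | h
    · rw [h3 h]; norm_num
    · rw [h2 h]; norm_num

lemma single_coord (hμ : IsBernoulliProduct q μ) (j : ℕ) (b : Bool) :
    μ {x | x j = b} = ENNReal.ofReal (if b then q j else 1 - q j) := by
  have h := hμ.2 {j} (fun _ => b)
  have hset : {x : ℕ → Bool | ∀ i ∈ ({j} : Finset ℕ), x i = b} = {x | x j = b} := by
    ext x; simp
  rw [hset] at h
  rw [h, Finset.prod_singleton]

lemma meanVec_eq (hq : q ∈ roundVectors) (hμ : IsBernoulliProduct q μ) :
    meanVec μ = q := by
  funext j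
  have h := single_coord hμ j true
  simp only [if_true] at h
  rw [meanVec, h, ENNReal.toReal_ofReal (q_bounds hq j).1]

lemma ae_odd_coord (hq : q ∈ roundVectors) (hμ : IsBernoulliProduct q μ) (n : ℕ) :
    ∀ᵐ x ∂μ, x (2 * n + 1) = decide (q (2 * n) = 2/3) := by
  obtain ⟨h1, h2, h3⟩ := hq n
  rcases h1 with h | h
  · have hd : decide (q (2 * n) = 2/3) = false := by
      apply decide_eq_false
      rw [h]; norm_num
    rw [hd]
    rw [ae_iff]
    have hset : {x : ℕ → Bool | ¬ x (2 * n + 1) = false} = {x | x (2 * n + 1) = true} := by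
      ext x; simp
    rw [hset, single_coord hμ]
    simp [h3 h]
  · have hd : decide (q (2 * n) = 2/3) = true := decide_eq_true h
    rw [hd]
    rw [ae_iff]
    have hset : {x : ℕ → Bool | ¬ x (2 * n + 1) = true} = {x | x (2 * n + 1) = false} := by
      ext x; simp
    rw [hset, single_coord hμ]
    simp [h2 h]

lemma est_eq_q (hq : q ∈ roundVectors) {x : ℕ → Bool}
    (hx : ∀ n, x (2 * n + 1) = decide (q (2 * n) = 2/3)) : est x = q := by
  funext j
  rcases Nat.even_or_odd j with ⟨n, hn⟩ | ⟨n, hn⟩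
  · have hj : j = 2 * n := by omega
    subst hj
    have hdiv : 2 * n / 2 = n := by omega
    have hmod : 2 * n % 2 = 0 := by omega
    rw [est, hdiv, hmod, hx n]
    obtain ⟨h1, _, _⟩ := hq n
    rcases h1 with h | h
    · have : decide (q (2 * n) = 2/3) = false := decide_eq_false (by rw [h]; norm_num)
      rw [this, h]; norm_num
    · have : decide (q (2 * n) = 2/3) = true := decide_eq_true h
      rw [this, h]; norm_num
  · subst hn
    have hdiv : (2 * n + 1) / 2 = n := by omega
    have hmod : (2 * n + 1) % 2 = 1 := by omega
    rw [est, hdiv, hmod, hx n]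
    obtain ⟨h1, h2, h3⟩ := hq n
    rcases h1 with h | h
    · have : decide (q (2 * n) = 2/3) = false := decide_eq_false (by rw [h]; norm_num)
      rw [this, h3 h]; norm_num
    · have : decide (q (2 * n) = 2/3) = true := decide_eq_true h
      rw [this, h2 h]; norm_num

lemma ae_supDist_zero (hq : q ∈ roundVectors) (hμ : IsBernoulliProduct q μ) :
    ∀ᵐ x ∂μ, supDist (est x) (meanVec μ) = 0 := by
  have h : ∀ᵐ x ∂μ, ∀ n, x (2 * n + 1) = decide (q (2 * n) = 2/3) :=
    (ae_all_iff).2 (ae_odd_coord hq hμ)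
  filter_upwards [h] with x hx
  rw [est_eq_q hq hx, meanVec_eq hq hμ, supDist_self]

end main

/-- `Q_round` is UME-learnable; indeed there is a measurable single-sample estimator
`A₁ : {0,1}^ℕ → [0,1]^ℕ` whose error `‖A₁ X − Mean μ‖_∞` is `0` almost surely for every
`μ ∈ Q_round`. -/
theorem Qround_UMELearnable :
    UMELearnable Qround ∧
    ∃ A₁ : (ℕ → Bool) → ℕ → ℝ,
      Measurable A₁ ∧ (∀ x j, A₁ x j ∈ Set.Icc (0 : ℝ) 1) ∧
      ∀ μ ∈ Qround, ∀ᵐ x ∂μ, supDist (A₁ x) (meanVec μ) = 0 := by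
  constructor
  · refine ⟨fun n S => if h : 0 < n then est (S ⟨0, h⟩) else fun _ => 0, ?_, ?_, ?_⟩
    · intro n
      by_cases h : 0 < n
      · simp only [h, dif_pos]
        exact measurable_est.comp (measurable_pi_apply _)
      · simp only [h, dif_neg, not_false_iff]
        exact measurable_const
    · intro n S j
      by_cases h : 0 < n
      · simp only [h, dif_pos]
        exact est_mem_Icc _ _
      · simp only [h, dif_neg, not_false_iff]
        exact ⟨le_refl 0, zero_le_one⟩
    · rintro μ ⟨q, hq, hμ⟩
      have : IsProbabilityMeasure μ := hμ.1
      have key : ∀ n : ℕ, 0 < n →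
          (∫ S, supDist ((if h : 0 < n then est (S ⟨0, h⟩) else fun _ => 0) : ℕ → ℝ) (meanVec μ)
            ∂(Measure.pi fun _ : Fin n => μ)) = 0 := by
        intro n hn
        have hae : ∀ᵐ S ∂(Measure.pi fun _ : Fin n => μ),
            supDist ((if h : 0 < n then est (S ⟨0, h⟩) else fun _ => 0) : ℕ → ℝ) (meanVec μ)
              = 0 := by
          have h0 : ∀ᵐ x ∂μ, supDist (est x) (meanVec μ) = 0 := ae_supDist_zero hq hμ
          rw [ae_iff] at h0 ⊢
          refine measure_mono_null ?_
            (MeasureTheory.Measure.pi_eval_preimage_null (μ := fun _ : Fin n => μ)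
              (i := ⟨0, hn⟩) h0)
          intro S hS
          simp only [Set.mem_setOf_eq, dif_pos hn] at hS
          exact hS
        exact integral_eq_zero_of_ae hae
      have hev : ∀ᶠ n : ℕ in atTop,
          (∫ S, supDist ((if h : 0 < n then est (S ⟨0, h⟩) else fun _ => 0) : ℕ → ℝ) (meanVec μ)
            ∂(Measure.pi fun _ : Fin n => μ)) = 0 :=
        (eventually_gt_atTop 0).mono key
      exact Tendsto.congr' (hev.mono fun n h => h.symm) tendsto_const_nhds
  · refine ⟨est, measurable_est, est_mem_Icc, ?_⟩
    rintro μ ⟨q, hq, hμ⟩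
    exact ae_supDist_zero hq hμ
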